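/- (Theorem 3.3, training error bound.) Let A ∈ ℂ^{n×n} be Hermitian, τ > 0, and let (u_k)_{k≥0} and (x_k)_{k≥0} be sequences in ℂⁿ with x_0 = u_0 and x_{k+1} = (I + i(τ/2)A)⁻¹ (I − i(τ/2)A) x_k for all k ≥ 0. Define the residuals l_k(A) := i (u_{k+1} − u_k)/τ − A ((u_{k+1} + u_k)/2) and the errors e_k := u_k − x_k. Then for every k ≥ 0, ‖e_{k+1}‖₂ ≤ τ Σ_{i=0}^{k} ‖l_i(A)‖₂. -/

import Mathlib

open Matrix

/-- The Euclidean (2-)norm of a vector in `ℂⁿ`: `‖x‖₂ = (∑ k |x_k|²)^{1/2}`. -/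
noncomputable def euclNorm {n : ℕ} (v : Fin n → ℂ) : ℝ :=
  Real.sqrt (∑ k, ‖v k‖ ^ 2)

namespace CNDMDAux
open ComplexOrder

variable {n : ℕ}

lemma euclNorm_eq_sqrt_re (v : Fin n → ℂ) :
    euclNorm v = Real.sqrt ((star v ⬝ᵥ v).re) := by
  unfold euclNorm
  congr 1
  rw [dotProduct, Complex.re_sum]
  refine Finset.sum_congr rfl fun k _ => ?_
  simp [Complex.sq_norm, Complex.normSq_apply, Complex.mul_re]

lemma re_dot_nonneg (v : Fin n → ℂ) : 0 ≤ (star v ⬝ᵥ v).re :=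
  (Complex.nonneg_iff.mp (dotProduct_star_self_nonneg v)).1

lemma eq_zero_of_re_dot_eq_zero {v : Fin n → ℂ} (h : (star v ⬝ᵥ v).re = 0) : v = 0 := by
  have h2 := dotProduct_star_self_nonneg v
  have him := (Complex.nonneg_iff.mp h2).2
  have : star v ⬝ᵥ v = 0 := Complex.ext h him.symm
  exact dotProduct_star_self_eq_zero.mp this

lemma euclNorm_sq (v : Fin n → ℂ) : euclNorm v ^ 2 = (star v ⬝ᵥ v).re := by
  rw [euclNorm_eq_sqrt_re, Real.sq_sqrt (re_dot_nonneg v)]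

lemma euclNorm_eq_norm (v : Fin n → ℂ) :
    euclNorm v = ‖(WithLp.equiv 2 (Fin n → ℂ)).symm v‖ := by
  rw [EuclideanSpace.norm_eq]
  rfl

lemma euclNorm_add_le (a b : Fin n → ℂ) : euclNorm (a + b) ≤ euclNorm a + euclNorm b := by
  simp only [euclNorm_eq_norm]
  rw [WithLp.equiv_symm_apply, WithLp.toLp_add]
  exact norm_add_le _ _

lemma euclNorm_smul (c : ℂ) (v : Fin n → ℂ) :
    euclNorm (c • v) = ‖c‖ * euclNorm v := by
  simp only [euclNorm_eq_norm]
  rw [WithLp.equiv_symm_apply, WithLp.toLp_smul, norm_smul]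

lemma euclNorm_zero : euclNorm (0 : Fin n → ℂ) = 0 := by
  simp [euclNorm]

lemma euclNorm_nonneg (v : Fin n → ℂ) : 0 ≤ euclNorm v := Real.sqrt_nonneg _

/-- The key quadratic identity: `‖(1 + itA)v‖² = ‖v‖² + t²‖Av‖²` for Hermitian `A`. -/
lemma quad {A : Matrix (Fin n) (Fin n) ℂ} (hA : A.IsHermitian) (c : ℂ) (hc : c.re = 0)
    (v : Fin n → ℂ) :
    (star ((1 + c • A) *ᵥ v) ⬝ᵥ ((1 + c • A) *ᵥ v)).re
      = (star v ⬝ᵥ v).re + (c.im) ^ 2 * (star (A *ᵥ v) ⬝ᵥ (A *ᵥ v)).re := by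
  have hconj : star c = -c := by
    rw [Complex.star_def, Complex.ext_iff]
    simp [hc]
  have hM : (1 + c • A)ᴴ = 1 - c • A := by
    rw [conjTranspose_add, conjTranspose_one, conjTranspose_smul, hA.eq, hconj, neg_smul,
      sub_eq_add_neg]
  have hMM : (1 - c • A) * (1 + c • A) = 1 + (-(c * c)) • (A * A) := by
    rw [sub_mul, one_mul, mul_add, mul_one, Matrix.smul_mul, Matrix.mul_smul, smul_smul,
      neg_smul]
    abel
  have hAv : star v ⬝ᵥ ((A * A) *ᵥ v) = star (A *ᵥ v) ⬝ᵥ (A *ᵥ v) := by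
    rw [star_mulVec, hA.eq, ← Matrix.dotProduct_mulVec, mulVec_mulVec]
  rw [star_mulVec, hM, ← Matrix.dotProduct_mulVec, mulVec_mulVec, hMM, add_mulVec, one_mulVec,
    smul_mulVec, dotProduct_add, dotProduct_smul, hAv]
  have hcc : -(c * c) = ((c.im ^ 2 : ℝ) : ℂ) := by
    rw [Complex.ext_iff]
    constructor <;> simp [Complex.mul_re, Complex.mul_im, hc, ← Complex.ofReal_pow] <;> ring
  rw [hcc, Complex.add_re, smul_eq_mul, Complex.re_ofReal_mul]

lemma euclNorm_le_quad {A : Matrix (Fin n) (Fin n) ℂ} (hA : A.IsHermitian) (c : ℂ)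
    (hc : c.re = 0) (v : Fin n → ℂ) :
    euclNorm v ≤ euclNorm ((1 + c • A) *ᵥ v) := by
  rw [euclNorm_eq_sqrt_re, euclNorm_eq_sqrt_re]
  apply Real.sqrt_le_sqrt
  rw [quad hA c hc v]
  nlinarith [re_dot_nonneg (A *ᵥ v), sq_nonneg c.im]

lemma isUnit_quad {A : Matrix (Fin n) (Fin n) ℂ} (hA : A.IsHermitian) (c : ℂ)
    (hc : c.re = 0) : IsUnit (1 + c • A) := by
  rw [← Matrix.mulVec_injective_iff_isUnit]
  intro a b hab
  have h0 : (1 + c • A) *ᵥ (a - b) = 0 := by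
    rw [mulVec_sub, hab, sub_self]
  have h1 := euclNorm_le_quad hA c hc (a - b)
  rw [h0, euclNorm_zero] at h1
  have h2 : euclNorm (a - b) = 0 := le_antisymm h1 (euclNorm_nonneg _)
  rw [euclNorm_eq_sqrt_re] at h2
  have h3 : (star (a - b) ⬝ᵥ (a - b)).re = 0 := by
    have := Real.sqrt_eq_zero (re_dot_nonneg (a - b)) |>.mp h2
    exact this
  have := eq_zero_of_re_dot_eq_zero h3
  exact sub_eq_zero.mp this

end CNDMDAux

open CNDMDAux in
/-- **Theorem 3.3, training error bound.** Let `A ∈ ℂ^{n×n}` be Hermitian,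
`τ > 0`, `x_0 = u_0`, and let `(x_k)` follow the CN-DMD iteration
`x_{k+1} = (I + i(τ/2)A)⁻¹ (I - i(τ/2)A) x_k`.  With the residuals
`l_k(A) = i (u_{k+1} − u_k)/τ − A ((u_{k+1} + u_k)/2)` and errors `e_k = u_k − x_k`, one has
`‖e_{k+1}‖₂ ≤ τ ∑_{i=0}^{k} ‖l_i(A)‖₂` for every `k ≥ 0`. -/
theorem cnDMD_training_error_bound (n : ℕ) (A : Matrix (Fin n) (Fin n) ℂ)
    (hA : A.IsHermitian) (τ : ℝ) (hτ : 0 < τ) (u x : ℕ → Fin n → ℂ)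
    (h0 : x 0 = u 0)
    (hx : ∀ k : ℕ, x (k + 1) =
      ((1 + (Complex.I * ((τ : ℂ) / 2)) • A)⁻¹ *
          (1 - (Complex.I * ((τ : ℂ) / 2)) • A)).mulVec (x k)) :
    ∀ k : ℕ, euclNorm (u (k + 1) - x (k + 1)) ≤
      τ * ∑ i ∈ Finset.range (k + 1),
        euclNorm ((Complex.I / (τ : ℂ)) • (u (i + 1) - u i) -
          A.mulVec ((2 : ℂ)⁻¹ • (u (i + 1) + u i))) := by
  set c : ℂ := Complex.I * ((τ : ℂ) / 2) with hc_def
  have hcre : c.re = 0 := by simp [hc_def]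
  have hncre : (-c).re = 0 := by simp [hcre]
  set B : Matrix (Fin n) (Fin n) ℂ := 1 + c • A with hB_def
  set C : Matrix (Fin n) (Fin n) ℂ := 1 - c • A with hC_def
  have hC_eq : C = 1 + (-c) • A := by rw [hC_def, neg_smul, sub_eq_add_neg]
  have hτC : (τ : ℂ) ≠ 0 := Complex.ofReal_ne_zero.mpr hτ.ne'
  -- invertibility
  have hBu : IsUnit B := isUnit_quad hA c hcre
  have hCu : IsUnit C := hC_eq ▸ isUnit_quad hA (-c) hncre
  have hBd : IsUnit B.det := (Matrix.isUnit_iff_isUnit_det B).mp hBu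
  have hCd : IsUnit C.det := (Matrix.isUnit_iff_isUnit_det C).mp hCu
  set L : Matrix (Fin n) (Fin n) ℂ := B⁻¹ * C with hL_def
  -- unitarity of L
  have hcomm : B * C = C * B :=
    ((Commute.one_left C).add_left
      (((Commute.one_right (c • A)).sub_right (Commute.refl (c • A))))).eq
  have hLH : Lᴴ = B * C⁻¹ := by
    have hBH : Bᴴ = C := by
      rw [hB_def, hC_def, conjTranspose_add, conjTranspose_one, conjTranspose_smul, hA.eq]
      have : star c = -c := by rw [Complex.star_def, Complex.ext_iff]; simp [hcre]
      rw [this, neg_smul, sub_eq_add_neg]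
    have hCH : Cᴴ = B := by
      rw [hC_def, hB_def, conjTranspose_sub, conjTranspose_one, conjTranspose_smul, hA.eq]
      have : star c = -c := by rw [Complex.star_def, Complex.ext_iff]; simp [hcre]
      rw [this, neg_smul, sub_neg_eq_add]
    rw [hL_def, conjTranspose_mul, hCH, Matrix.conjTranspose_nonsing_inv, hBH]
  have hinvcomm : C⁻¹ * B⁻¹ = B⁻¹ * C⁻¹ := by
    rw [← Matrix.mul_inv_rev, hcomm, Matrix.mul_inv_rev]
  have hLL : Lᴴ * L = 1 := by
    rw [hLH, hL_def, Matrix.mul_assoc, ← Matrix.mul_assoc C⁻¹, hinvcomm,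
      Matrix.mul_assoc B⁻¹, Matrix.nonsing_inv_mul C hCd, Matrix.mul_one,
      Matrix.mul_nonsing_inv B hBd]
  have hLnorm : ∀ v : Fin n → ℂ, euclNorm (L *ᵥ v) = euclNorm v := by
    intro v
    rw [euclNorm_eq_sqrt_re, euclNorm_eq_sqrt_re]
    congr 2
    rw [star_mulVec, ← Matrix.dotProduct_mulVec, mulVec_mulVec, hLL, one_mulVec]
  -- contraction of B⁻¹
  have hBinv : ∀ w : Fin n → ℂ, euclNorm (B⁻¹ *ᵥ w) ≤ euclNorm w := by
    intro w
    have hw : B *ᵥ (B⁻¹ *ᵥ w) = w := by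
      rw [mulVec_mulVec, Matrix.mul_nonsing_inv B hBd, one_mulVec]
    calc euclNorm (B⁻¹ *ᵥ w) ≤ euclNorm (B *ᵥ (B⁻¹ *ᵥ w)) := euclNorm_le_quad hA c hcre _
      _ = euclNorm w := by rw [hw]
  -- the residuals
  set l : ℕ → Fin n → ℂ := fun i => (Complex.I / (τ : ℂ)) • (u (i + 1) - u i) -
      A.mulVec ((2 : ℂ)⁻¹ • (u (i + 1) + u i)) with hl_def
  -- key recurrence
  have hkey : ∀ k : ℕ, u (k + 1) - x (k + 1) =
      L *ᵥ (u k - x k) + (-(Complex.I) * (τ : ℂ)) • (B⁻¹ *ᵥ l k) := by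
    intro k
    have hBu1 : B *ᵥ u (k + 1) = C *ᵥ u k + (-(Complex.I) * (τ : ℂ)) • l k := by
      rw [hB_def, hC_def, add_mulVec, sub_mulVec, one_mulVec, one_mulVec,
        smul_mulVec, smul_mulVec, hl_def]
      simp only [mulVec_smul, mulVec_add, mulVec_sub, smul_sub, smul_add, hc_def]
      match_scalars <;> field_simp <;> ring_nf <;> simp [Complex.I_sq]
    have hu1 : u (k + 1) = L *ᵥ u k + (-(Complex.I) * (τ : ℂ)) • (B⁻¹ *ᵥ l k) := by
      have := congrArg (fun w => B⁻¹ *ᵥ w) hBu1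
      simp only [mulVec_mulVec, Matrix.nonsing_inv_mul B hBd, one_mulVec,
        mulVec_add, mulVec_smul] at this
      rw [this, hL_def, ← mulVec_mulVec]
    have hx1 : x (k + 1) = L *ᵥ x k := by rw [hx k, hL_def]
    rw [hu1, hx1, mulVec_sub]
    rw [add_sub_right_comm]
    rw [mulVec_sub]
  -- step inequality
  have hstep : ∀ k : ℕ, euclNorm (u (k + 1) - x (k + 1)) ≤
      euclNorm (u k - x k) + τ * euclNorm (l k) := by
    intro k
    rw [hkey k]
    refine (euclNorm_add_le _ _).trans ?_
    rw [hLnorm, euclNorm_smul]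
    have habs : ‖(-(Complex.I) * (τ : ℂ))‖ = τ := by
      rw [neg_mul, norm_neg, norm_mul, Complex.norm_I, one_mul,
        Complex.norm_real, Real.norm_eq_abs, abs_of_pos hτ]
    rw [habs]
    have := hBinv (l k)
    nlinarith [euclNorm_nonneg (l k), hBinv (l k)]
  -- induction
  intro k
  induction k with
  | zero =>
      have he0 : u 0 - x 0 = 0 := by rw [h0, sub_self]
      have := hstep 0
      rw [he0, euclNorm_zero] at this
      simp only [zero_add] at this
      rw [Finset.sum_range_one]
      exact this
  | succ k ih =>
      have ih' : euclNorm (u (k + 1) - x (k + 1)) ≤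
          τ * ∑ i ∈ Finset.range (k + 1), euclNorm (l i) := ih
      calc euclNorm (u (k + 2) - x (k + 2))
          ≤ euclNorm (u (k + 1) - x (k + 1)) + τ * euclNorm (l (k + 1)) := hstep (k + 1)
        _ ≤ τ * ∑ i ∈ Finset.range (k + 1), euclNorm (l i) + τ * euclNorm (l (k + 1)) := by
            linarith [ih']
        _ = τ * ∑ i ∈ Finset.range (k + 2), euclNorm (l i) := by
            rw [Finset.sum_range_succ (fun i => euclNorm (l i)) (k + 1), mul_add]
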